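/- For every finite poset X with n elements, the row sums of the matrix M^X are all equal: the element Σ_{Q ∈ Tot_X} a_{ε_{PQ}} of the ring R = ℤ[a_ε] does not depend on the choice of P ∈ Tot_X. Consequently, the column vector (1,1,…,1)ᵀ is a right eigenvector of M^X with eigenvalue Π_X({a_ε}) := Σ_{Q ∈ Tot_X} a_{ε_{PQ}}. -/

import Mathlib

/-- A linear extension of a partially ordered set `X` with `n` elements:
an order-preserving bijection `X ≃ Fin n`. -/
def LinExt (X : Type*) [PartialOrder X] (n : ℕ) : Type _ :=
  {P : X ≃ Fin n // ∀ a b : X, a ≤ b → P a ≤ P b}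

/-- `eps P Q k = true` iff `Q⁻¹(k+2)` (1-based) is a `(P,Q)`-disagreement node, i.e.
`ε_{PQ}(k+1) = 1` in 1-based indexing. -/
def eps {X : Type*} [PartialOrder X] {n : ℕ} (P Q : LinExt X n) (k : Fin (n - 1)) : Bool :=
  decide (P.1 (Q.1.symm ⟨k.1 + 1, by have := k.2; omega⟩) <
          P.1 (Q.1.symm ⟨k.1, by have := k.2; omega⟩))

/-- The matrix `M^X` over the polynomial ring `ℤ[a_ε]`, with rows and columns indexed
by the linear extensions of `X`, and `(M^X)_{PQ} = a_{ε_{PQ}}`. -/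
noncomputable def pedMatrix (X : Type*) [PartialOrder X] (n : ℕ) :
    Matrix (LinExt X n) (LinExt X n) (MvPolynomial (Fin (n - 1) → Bool) ℤ) :=
  fun P Q => MvPolynomial.X (eps P Q)

namespace PedAux

variable {X : Type*} [PartialOrder X] {n : ℕ}

lemma swap_lt {k : ℕ} (hk : k + 1 < n) {u v : Fin n}
    (h1 : ¬(u = (⟨k, by omega⟩ : Fin n) ∧ v = (⟨k + 1, hk⟩ : Fin n)))
    (h2 : ¬(u = (⟨k + 1, hk⟩ : Fin n) ∧ v = (⟨k, by omega⟩ : Fin n))) :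
    Equiv.swap (⟨k, by omega⟩ : Fin n) ⟨k + 1, hk⟩ u <
      Equiv.swap (⟨k, by omega⟩ : Fin n) ⟨k + 1, hk⟩ v ↔ u < v := by
  have hval : ∀ w : Fin n, ((Equiv.swap (⟨k, by omega⟩ : Fin n) ⟨k + 1, hk⟩ w : Fin n) : ℕ)
      = if w.1 = k then k + 1 else if w.1 = k + 1 then k else w.1 := by
    intro w
    rw [Equiv.swap_apply_def]
    split_ifs <;> simp_all [Fin.ext_iff]
  have h1' : ¬(u.1 = k ∧ v.1 = k + 1) := fun he => h1 ⟨Fin.ext he.1, Fin.ext he.2⟩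
  have h2' : ¬(u.1 = k + 1 ∧ v.1 = k) := fun he => h2 ⟨Fin.ext he.1, Fin.ext he.2⟩
  rw [Fin.lt_def, Fin.lt_def, hval, hval]
  split_ifs <;> omega

lemma lt_of_le_ne (P : LinExt X n) {x y : X} (h : x ≤ y) (hne : x ≠ y) : P.1 x < P.1 y :=
  lt_of_le_of_ne (P.2 x y h) fun he => hne (P.1.injective he)

lemma swapQ_mono [DecidableEq X] (Q : LinExt X n) {a b : X} (hab : ¬a ≤ b) (hba : ¬b ≤ a)
    (hadj : ((Q.1 b : Fin n) : ℕ) = ((Q.1 a : Fin n) : ℕ) + 1 ∨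
            ((Q.1 a : Fin n) : ℕ) = ((Q.1 b : Fin n) : ℕ) + 1) :
    ∀ x y : X, x ≤ y → ((Equiv.swap a b).trans Q.1) x ≤ ((Equiv.swap a b).trans Q.1) y := by
  intro x y hxy
  rcases eq_or_ne x y with rfl | hne
  · exact le_rfl
  have hstr : ((Q.1 x : Fin n) : ℕ) < ((Q.1 y : Fin n) : ℕ) :=
    Fin.lt_def.mp (lt_of_le_ne Q hxy hne)
  simp only [Equiv.trans_apply]
  rw [Fin.le_def]
  by_cases hxa : x = a
  · subst hxa
    by_cases hyb : y = b
    · exact absurd (hyb ▸ hxy) hab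
    · rw [Equiv.swap_apply_left, Equiv.swap_apply_of_ne_of_ne (Ne.symm hne) hyb]
      omega
  · by_cases hxb : x = b
    · subst hxb
      by_cases hya : y = a
      · exact absurd (hya ▸ hxy) hba
      · rw [Equiv.swap_apply_right, Equiv.swap_apply_of_ne_of_ne hya (Ne.symm hne)]
        omega
    · rw [Equiv.swap_apply_of_ne_of_ne hxa hxb]
      by_cases hya : y = a
      · subst hya; rw [Equiv.swap_apply_left]; omega
      · by_cases hyb : y = b
        · subst hyb; rw [Equiv.swap_apply_right]; omega
        · rw [Equiv.swap_apply_of_ne_of_ne hya hyb]; omega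

lemma pswap_mono (P : LinExt X n) {k : ℕ} (hk : k + 1 < n)
    (hab : ¬ P.1.symm ⟨k, by omega⟩ ≤ P.1.symm ⟨k + 1, hk⟩) :
    ∀ x y : X, x ≤ y →
      (P.1.trans (Equiv.swap (⟨k, by omega⟩ : Fin n) ⟨k + 1, hk⟩)) x ≤
      (P.1.trans (Equiv.swap (⟨k, by omega⟩ : Fin n) ⟨k + 1, hk⟩)) y := by
  intro x y hxy
  rcases eq_or_ne x y with rfl | hne
  · exact le_rfl
  have hlt : P.1 x < P.1 y := lt_of_le_ne P hxy hne
  simp only [Equiv.trans_apply]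
  have h1 : ¬(P.1 x = (⟨k, by omega⟩ : Fin n) ∧ P.1 y = (⟨k + 1, hk⟩ : Fin n)) := by
    rintro ⟨e1, e2⟩
    apply hab
    rw [← e1, ← e2, Equiv.symm_apply_apply, Equiv.symm_apply_apply]
    exact hxy
  have h2 : ¬(P.1 x = (⟨k + 1, hk⟩ : Fin n) ∧ P.1 y = (⟨k, by omega⟩ : Fin n)) := by
    rintro ⟨e1, e2⟩
    rw [e1, e2] at hlt
    exact absurd hlt (by simp [Fin.lt_def])
  exact le_of_lt ((swap_lt hk h1 h2).mpr hlt)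

/-- The involution on linear extensions used in the swap step. -/
def swapExt [DecidableEq X] (Q : LinExt X n) {a b : X} (hab : ¬a ≤ b) (hba : ¬b ≤ a) :
    LinExt X n :=
  if h : ((Q.1 b : Fin n) : ℕ) = ((Q.1 a : Fin n) : ℕ) + 1 ∨
         ((Q.1 a : Fin n) : ℕ) = ((Q.1 b : Fin n) : ℕ) + 1 then
    ⟨(Equiv.swap a b).trans Q.1, swapQ_mono Q hab hba h⟩
  else Q

lemma swapExt_invol [DecidableEq X] {a b : X} (hab : ¬a ≤ b) (hba : ¬b ≤ a) (Q : LinExt X n) :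
    swapExt (swapExt Q hab hba) hab hba = Q := by
  by_cases h : ((Q.1 b : Fin n) : ℕ) = ((Q.1 a : Fin n) : ℕ) + 1 ∨
      ((Q.1 a : Fin n) : ℕ) = ((Q.1 b : Fin n) : ℕ) + 1
  · have hQ' : swapExt Q hab hba = ⟨(Equiv.swap a b).trans Q.1, swapQ_mono Q hab hba h⟩ := by
      unfold swapExt; exact dif_pos h
    rw [hQ']; unfold swapExt
    refine (dif_pos (by simpa [Equiv.trans_apply, Equiv.swap_apply_left, Equiv.swap_apply_right]
        using h.symm)).trans ?_
    apply Subtype.ext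
    simp only
    rw [← Equiv.trans_assoc, Equiv.swap_swap, Equiv.refl_trans]
  · have hQ : swapExt Q hab hba = Q := by unfold swapExt; exact dif_neg h
    rw [hQ, hQ]

lemma eps_congr {P P' Q Q' : LinExt X n}
    (h : ∀ j : Fin n, P.1 (Q.1.symm j) = P'.1 (Q'.1.symm j)) : eps P Q = eps P' Q' := by
  funext m
  unfold eps
  rw [h, h]

lemma eps_swapExt [DecidableEq X] (P P₂ : LinExt X n) {k : ℕ} (hk : k + 1 < n)
    (hab : ¬ P.1.symm ⟨k, by omega⟩ ≤ P.1.symm ⟨k + 1, hk⟩)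
    (hba : ¬ P.1.symm ⟨k + 1, hk⟩ ≤ P.1.symm ⟨k, by omega⟩)
    (hP2 : P₂.1 = P.1.trans (Equiv.swap (⟨k, by omega⟩ : Fin n) ⟨k + 1, hk⟩))
    (Q : LinExt X n) :
    eps P₂ (swapExt Q hab hba) = eps P Q := by
  set a : X := P.1.symm ⟨k, by omega⟩ with ha
  set b : X := P.1.symm ⟨k + 1, hk⟩ with hb
  set s : Equiv.Perm (Fin n) := Equiv.swap (⟨k, by omega⟩ : Fin n) ⟨k + 1, hk⟩ with hs
  have hPa : P.1 a = ⟨k, by omega⟩ := by rw [ha, Equiv.apply_symm_apply]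
  have hPb : P.1 b = ⟨k + 1, hk⟩ := by rw [hb, Equiv.apply_symm_apply]
  have hconj : ∀ x : X, P.1 (Equiv.swap a b x) = s (P.1 x) := by
    intro x
    rcases eq_or_ne x a with rfl | hxa
    · rw [Equiv.swap_apply_left, hPa, hPb, hs, Equiv.swap_apply_left]
    rcases eq_or_ne x b with rfl | hxb
    · rw [Equiv.swap_apply_right, hPb, hPa, hs, Equiv.swap_apply_right]
    · rw [Equiv.swap_apply_of_ne_of_ne hxa hxb, hs,
        Equiv.swap_apply_of_ne_of_ne (fun he => hxa (P.1.injective (he.trans hPa.symm)))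
          (fun he => hxb (P.1.injective (he.trans hPb.symm)))]
  by_cases h : ((Q.1 b : Fin n) : ℕ) = ((Q.1 a : Fin n) : ℕ) + 1 ∨
      ((Q.1 a : Fin n) : ℕ) = ((Q.1 b : Fin n) : ℕ) + 1
  · have hQ' : swapExt Q hab hba = ⟨(Equiv.swap a b).trans Q.1, swapQ_mono Q hab hba h⟩ := by
      unfold swapExt; exact dif_pos h
    rw [hQ']
    apply eps_congr
    intro j
    have hsymm : ((Equiv.swap a b).trans Q.1).symm j = Equiv.swap a b (Q.1.symm j) := by
      simp [Equiv.symm_trans_apply]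
    simp only [hsymm, hP2, Equiv.trans_apply, hconj, ← hs]
    exact Equiv.swap_apply_self _ _ _
  · have hQ : swapExt Q hab hba = Q := by unfold swapExt; exact dif_neg h
    rw [hQ]
    funext m
    unfold eps
    simp only [hP2, Equiv.trans_apply, ← hs]
    rw [decide_eq_decide]
    apply swap_lt hk
    · rintro ⟨e1, e2⟩
      apply h
      right
      have h3 : Q.1.symm ⟨m.1 + 1, by have := m.2; omega⟩ = a := by
        apply P.1.injective
        rw [e1, hPa]
      have h4 : Q.1.symm ⟨m.1, by have := m.2; omega⟩ = b := by
        apply P.1.injective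
        rw [e2, hPb]
      have hQa : Q.1 a = ⟨m.1 + 1, by have := m.2; omega⟩ := by
        have h5 := congrArg Q.1 h3
        rw [Equiv.apply_symm_apply] at h5
        exact h5.symm
      have hQb : Q.1 b = ⟨m.1, by have := m.2; omega⟩ := by
        have h5 := congrArg Q.1 h4
        rw [Equiv.apply_symm_apply] at h5
        exact h5.symm
      rw [hQa, hQb]
    · rintro ⟨e1, e2⟩
      apply h
      left
      have h3 : Q.1.symm ⟨m.1 + 1, by have := m.2; omega⟩ = b := by
        apply P.1.injective
        rw [e1, hPb]
      have h4 : Q.1.symm ⟨m.1, by have := m.2; omega⟩ = a := by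
        apply P.1.injective
        rw [e2, hPa]
      have hQb : Q.1 b = ⟨m.1 + 1, by have := m.2; omega⟩ := by
        have h5 := congrArg Q.1 h3
        rw [Equiv.apply_symm_apply] at h5
        exact h5.symm
      have hQa : Q.1 a = ⟨m.1, by have := m.2; omega⟩ := by
        have h5 := congrArg Q.1 h4
        rw [Equiv.apply_symm_apply] at h5
        exact h5.symm
      simp only [hQa, hQb]

lemma sum_swap [DecidableEq X] [Fintype (LinExt X n)] (P P₂ : LinExt X n) {k : ℕ} (hk : k + 1 < n)
    (hab : ¬ P.1.symm ⟨k, by omega⟩ ≤ P.1.symm ⟨k + 1, hk⟩)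
    (hP2 : P₂.1 = P.1.trans (Equiv.swap (⟨k, by omega⟩ : Fin n) ⟨k + 1, hk⟩)) :
    ∑ Q : LinExt X n, (MvPolynomial.X (eps P Q) : MvPolynomial (Fin (n - 1) → Bool) ℤ) =
    ∑ Q : LinExt X n, MvPolynomial.X (eps P₂ Q) := by
  have hba : ¬ P.1.symm ⟨k + 1, hk⟩ ≤ P.1.symm ⟨k, by omega⟩ := by
    intro h
    have := P.2 _ _ h
    rw [Equiv.apply_symm_apply, Equiv.apply_symm_apply] at this
    exact absurd this (by simp [Fin.le_def])
  exact Fintype.sum_bijective (fun Q => swapExt Q hab hba)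
    (Function.Involutive.bijective (swapExt_invol hab hba))
    _ _ (fun Q => by rw [eps_swapExt P P₂ hk hab hba hP2 Q])

/-- Inversion count of a function on `Fin n`. -/
def invC (f : Fin n → Fin n) : ℕ :=
  (Finset.univ.filter (fun p : Fin n × Fin n => p.1 < p.2 ∧ f p.2 < f p.1)).card

lemma invC_pos {f : Fin n → Fin n} {k : ℕ} (hk : k + 1 < n)
    (hdesc : f ⟨k + 1, hk⟩ < f ⟨k, by omega⟩) : 0 < invC f := by
  rw [invC, Finset.card_pos]
  exact ⟨((⟨k, by omega⟩ : Fin n), (⟨k + 1, hk⟩ : Fin n)),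
    Finset.mem_filter.mpr ⟨Finset.mem_univ _, Fin.mk_lt_mk.mpr (by omega), hdesc⟩⟩

lemma invC_lt (f : Fin n → Fin n) {k : ℕ} (hk : k + 1 < n)
    (hdesc : f ⟨k + 1, hk⟩ < f ⟨k, by omega⟩) :
    invC (f ∘ (Equiv.swap (⟨k, by omega⟩ : Fin n) ⟨k + 1, hk⟩)) < invC f := by
  unfold invC
  set s : Equiv.Perm (Fin n) := Equiv.swap (⟨k, by omega⟩ : Fin n) ⟨k + 1, hk⟩ with hs
  have hmem : ((⟨k, by omega⟩ : Fin n), (⟨k + 1, hk⟩ : Fin n)) ∈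
      Finset.univ.filter (fun p : Fin n × Fin n => p.1 < p.2 ∧ f p.2 < f p.1) :=
    Finset.mem_filter.mpr ⟨Finset.mem_univ _, Fin.mk_lt_mk.mpr (by omega), hdesc⟩
  refine lt_of_le_of_lt
    (Finset.card_le_card_of_injOn (fun p => (s p.1, s p.2)) ?_ ?_)
    (Finset.card_erase_lt_of_mem hmem)
  · intro p hp
    simp only [Finset.mem_coe, Finset.mem_filter, Finset.mem_univ, true_and, Function.comp_apply] at hp
    obtain ⟨hp1, hp2⟩ := hp
    have h1 : ¬(p.1 = (⟨k, by omega⟩ : Fin n) ∧ p.2 = (⟨k + 1, hk⟩ : Fin n)) := by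
      rintro ⟨e1, e2⟩
      rw [e1, e2, hs, Equiv.swap_apply_left, Equiv.swap_apply_right] at hp2
      exact absurd hdesc (lt_asymm hp2)
    have h2 : ¬(p.1 = (⟨k + 1, hk⟩ : Fin n) ∧ p.2 = (⟨k, by omega⟩ : Fin n)) := by
      rintro ⟨e1, e2⟩
      rw [e1, e2] at hp1
      exact absurd hp1 (by simp [Fin.lt_def])
    have hslt : s p.1 < s p.2 := (swap_lt hk h1 h2).mpr hp1
    refine Finset.mem_erase.mpr ⟨?_, Finset.mem_filter.mpr ⟨Finset.mem_univ _, hslt, hp2⟩⟩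
    intro he
    have he1 : s p.1 = (⟨k, by omega⟩ : Fin n) := congrArg Prod.fst he
    have he2 : s p.2 = (⟨k + 1, hk⟩ : Fin n) := congrArg Prod.snd he
    have hq1 : p.1 = (⟨k + 1, hk⟩ : Fin n) := by
      have h5 := congrArg s he1
      rwa [hs, Equiv.swap_apply_self, Equiv.swap_apply_left] at h5
    have hq2 : p.2 = (⟨k, by omega⟩ : Fin n) := by
      have h5 := congrArg s he2
      rwa [hs, Equiv.swap_apply_self, Equiv.swap_apply_right] at h5
    rw [hq1, hq2] at hp1
    exact absurd hp1 (by simp [Fin.lt_def])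
  · intro p _ q _ hpq
    exact Prod.ext (s.injective (congrArg Prod.fst hpq)) (s.injective (congrArg Prod.snd hpq))

lemma eq_of_no_descent (P P' : LinExt X n)
    (h : ∀ (k : ℕ) (hk : k + 1 < n),
      P'.1 (P.1.symm ⟨k, by omega⟩) ≤ P'.1 (P.1.symm ⟨k + 1, hk⟩)) :
    P'.1 = P.1 := by
  set F : Fin n ≃ Fin n := P.1.symm.trans P'.1 with hF
  have step : ∀ (d i : ℕ) (hi : i + d < n), F ⟨i, by omega⟩ ≤ F ⟨i + d, hi⟩ := by
    intro d
    induction d with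
    | zero => intro i hi; exact le_of_eq (congrArg F (Fin.ext rfl))
    | succ d ihd =>
      intro i hi
      refine (ihd i (by omega)).trans ?_
      have := h (i + d) (by omega)
      exact this
  have hsm : StrictMono (F : Fin n → Fin n) := by
    intro i j hij
    have hij' : i.1 < j.1 := hij
    have hj : j = ⟨i.1 + (j.1 - i.1), by omega⟩ := Fin.ext (by simp; omega)
    have hle : F i ≤ F j := by
      rw [hj]
      have := step (j.1 - i.1) i.1 (by omega)
      simpa using this
    refine lt_of_le_of_ne hle fun he => ?_
    exact absurd (F.injective he) (Fin.ne_of_lt hij)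
  let e : Fin n ≃o Fin n :=
    { toEquiv := F
      map_rel_iff' := by
        intro i j
        exact hsm.le_iff_le }
  have hiso : ∀ i : Fin n, F i = i := by
    have he : e = OrderIso.refl (Fin n) := Subsingleton.elim _ _
    intro i
    have h1 : F i = e i := rfl
    rw [h1, he]
    rfl
  apply Equiv.ext
  intro x
  have := hiso (P.1 x)
  rw [hF] at this
  simpa [Equiv.trans_apply, Equiv.symm_apply_apply] using this

lemma rowsum_const [Fintype (LinExt X n)] (P P' : LinExt X n) :
    ∑ Q : LinExt X n, (MvPolynomial.X (eps P Q) : MvPolynomial (Fin (n - 1) → Bool) ℤ) =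
    ∑ Q : LinExt X n, MvPolynomial.X (eps P' Q) := by
  suffices H : ∀ (N : ℕ) (P : LinExt X n),
      invC (fun i => P'.1 (P.1.symm i)) ≤ N →
      ∑ Q : LinExt X n, (MvPolynomial.X (eps P Q) : MvPolynomial (Fin (n - 1) → Bool) ℤ) =
      ∑ Q : LinExt X n, MvPolynomial.X (eps P' Q) by
    exact H _ P le_rfl
  letI : DecidableEq X := Classical.decEq X
  intro N
  induction N with
  | zero =>
    intro P hP
    by_cases hd : ∃ k, ∃ hk : k + 1 < n,
        P'.1 (P.1.symm ⟨k + 1, hk⟩) < P'.1 (P.1.symm ⟨k, by omega⟩)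
    · obtain ⟨k, hk, hdesc⟩ := hd
      have := invC_pos (f := fun i => P'.1 (P.1.symm i)) hk hdesc
      omega
    · push_neg at hd
      have heq : P'.1 = P.1 := eq_of_no_descent P P' (fun k hk => hd k hk)
      refine Finset.sum_congr rfl fun Q _ => ?_
      congr 1
      funext m
      unfold eps
      rw [heq]
  | succ N ih =>
    intro P hP
    by_cases hd : ∃ k, ∃ hk : k + 1 < n,
        P'.1 (P.1.symm ⟨k + 1, hk⟩) < P'.1 (P.1.symm ⟨k, by omega⟩)
    · obtain ⟨k, hk, hdesc⟩ := hd
      have hab : ¬ P.1.symm ⟨k, by omega⟩ ≤ P.1.symm ⟨k + 1, hk⟩ := fun h =>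
        absurd (P'.2 _ _ h) (not_le.mpr hdesc)
      set P₂ : LinExt X n :=
        ⟨P.1.trans (Equiv.swap (⟨k, by omega⟩ : Fin n) ⟨k + 1, hk⟩), pswap_mono P hk hab⟩ with hP₂
      rw [sum_swap P P₂ hk hab rfl]
      apply ih P₂
      have hlt := invC_lt (fun i => P'.1 (P.1.symm i)) hk hdesc
      have hcomp : (fun i => P'.1 (P₂.1.symm i)) =
          (fun i => P'.1 (P.1.symm i)) ∘ (Equiv.swap (⟨k, by omega⟩ : Fin n) ⟨k + 1, hk⟩) := by
        funext i
        simp [hP₂, Equiv.symm_trans_apply]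
      rw [hcomp]
      omega
    · push_neg at hd
      have heq : P'.1 = P.1 := eq_of_no_descent P P' (fun k hk => hd k hk)
      refine Finset.sum_congr rfl fun Q _ => ?_
      congr 1
      funext m
      unfold eps
      rw [heq]

end PedAux

/-- The row sums of `M^X` do not depend on the row: `Σ_Q a_{ε_{PQ}}` is independent of
`P`; consequently the all-ones vector is a right eigenvector of `M^X`, with eigenvalue
the pedestal polynomial `Π_X({a_ε}) = Σ_Q a_{ε_{PQ}}`. -/
theorem pedMatrix_row_sums_constant (X : Type*) [PartialOrder X] [Fintype X] (n : ℕ)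
    (hn : Fintype.card X = n) [Fintype (LinExt X n)] :
    (∀ P P' : LinExt X n,
      ∑ Q : LinExt X n, (MvPolynomial.X (eps P Q) : MvPolynomial (Fin (n - 1) → Bool) ℤ) =
      ∑ Q : LinExt X n, MvPolynomial.X (eps P' Q)) ∧
    Matrix.mulVec (pedMatrix X n) (fun _ => 1) =
      fun P => ∑ Q : LinExt X n, MvPolynomial.X (eps P Q) := by
  constructor
  · intro P P'
    exact PedAux.rowsum_const P P'
  · funext P
    simp [Matrix.mulVec, pedMatrix, dotProduct, mul_one]
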